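/- Fix integers n ≥ 1, L ≥ 2 and d ≥ 0. Let x₁, …, x_n be i.i.d. uniform (Haar) on the complex unit circle U(1) = {z ∈ ℂ : |z| = 1}, and let y₁, …, y_n be i.i.d. uniform on the set μ_L = {e^{2πik/L} : k = 0, …, L−1} of L-th roots of unity. Then E[(Σ_{ℓ=1}^{L} |Σ_{j=1}^{n} x_j^ℓ|²)^d] ≤ E[(Σ_{ℓ=1}^{L} |Σ_{j=1}^{n} y_j^ℓ|²)^d]. -/

import Mathlib

open MeasureTheory Filter
open scoped ENNReal Classical

private lemma prod_ite01 {n : ℕ} (P : Fin n → Prop) [DecidablePred P] :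
    (∏ j, (if P j then (1:ℂ) else 0)) = if ∀ j, P j then 1 else 0 := by
  by_cases h : ∀ j, P j
  · rw [if_pos h]; simp [h]
  · rw [if_neg h]
    push_neg at h
    obtain ⟨j, hj⟩ := h
    exact Finset.prod_eq_zero (Finset.mem_univ j) (if_neg hj)

private 
lemma momS (a b : ℕ) :
    ∫ z, z ^ a * (starRingEnd ℂ) z ^ b
      ∂(Measure.map (fun t : ℝ => Complex.exp (Complex.I * (t : ℂ)))
        ((ENNReal.ofReal (2 * Real.pi))⁻¹ • volume.restrict (Set.Ico 0 (2 * Real.pi))))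
    = if a = b then 1 else 0 := by
  have hgm : Measurable (fun t : ℝ => Complex.exp (Complex.I * (t : ℂ))) := by fun_prop
  have hfc : Continuous (fun z : ℂ => z ^ a * (starRingEnd ℂ) z ^ b) :=
    (continuous_pow a).mul ((Complex.continuous_conj).pow b)
  rw [integral_map hgm.aemeasurable hfc.aestronglyMeasurable]
  have hpt : ∀ t : ℝ, Complex.exp (Complex.I * (t : ℂ)) ^ a
      * (starRingEnd ℂ) (Complex.exp (Complex.I * (t : ℂ))) ^ b
      = Complex.exp ((((a : ℂ) - b) * Complex.I) * (t : ℂ)) := by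
    intro t
    rw [← Complex.exp_conj, ← Complex.exp_nat_mul, ← Complex.exp_nat_mul, ← Complex.exp_add]
    congr 1
    simp only [map_mul, Complex.conj_I, Complex.conj_ofReal]
    ring
  simp_rw [hpt]
  rw [integral_smul_measure, Measure.restrict_congr_set MeasureTheory.Ico_ae_eq_Ioc,
    ← intervalIntegral.integral_of_le (by positivity : (0:ℝ) ≤ 2 * Real.pi)]
  rcases eq_or_ne a b with h | h
  · subst h
    simp only [sub_self, zero_mul, Complex.exp_zero, if_pos rfl]
    rw [intervalIntegral.integral_const]
    simp only [sub_zero, ENNReal.toReal_inv, ENNReal.toReal_ofReal (by positivity : (0:ℝ) ≤ 2 * Real.pi)]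
    rw [smul_smul, inv_mul_cancel₀ (by positivity : (2:ℝ) * Real.pi ≠ 0), one_smul, if_pos trivial]
  · have hc : ((a : ℂ) - b) * Complex.I ≠ 0 := by
      apply mul_ne_zero _ Complex.I_ne_zero
      rw [sub_ne_zero]
      exact_mod_cast fun hh => h (Nat.cast_injective hh)
    rw [integral_exp_mul_complex hc, if_neg h]
    have h1 : Complex.exp (((a : ℂ) - b) * Complex.I * (2 * Real.pi : ℝ)) = 1 := by
      have := Complex.exp_int_mul_two_pi_mul_I ((a : ℤ) - b)
      rw [← this]
      congr 1
      push_cast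
      ring
    rw [h1]
    simp

private 
lemma momZ (L : ℕ) (hL : 2 ≤ L) (a b : ℕ) :
    ∫ z, z ^ a * (starRingEnd ℂ) z ^ b
      ∂((L : ℝ≥0∞)⁻¹ • ∑ k ∈ Finset.range L,
        Measure.dirac (Complex.exp (2 * (Real.pi : ℂ) * Complex.I * (k : ℂ) / (L : ℂ))))
    = if (L : ℤ) ∣ (a : ℤ) - b then 1 else 0 := by
  have hL0 : (L : ℂ) ≠ 0 := Nat.cast_ne_zero.mpr (by omega)
  have hfc : Continuous (fun z : ℂ => z ^ a * (starRingEnd ℂ) z ^ b) :=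
    (continuous_pow a).mul ((Complex.continuous_conj).pow b)
  have hint : ∀ c : ℂ, Integrable (fun z : ℂ => z ^ a * (starRingEnd ℂ) z ^ b)
      (Measure.dirac c) := by
    intro c
    refine ⟨hfc.aestronglyMeasurable, ?_⟩
    rw [HasFiniteIntegral, lintegral_dirac]
    exact ENNReal.coe_lt_top
  rw [integral_smul_measure, integral_finset_sum_measure (fun k _ => hint _)]
  simp_rw [integral_dirac]
  set ζ : ℂ := Complex.exp (2 * (Real.pi : ℂ) * Complex.I * ((a : ℂ) - b) / L) with hζdef
  have hterm : ∀ k : ℕ,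
      Complex.exp (2 * (Real.pi : ℂ) * Complex.I * (k : ℂ) / (L : ℂ)) ^ a
        * (starRingEnd ℂ) (Complex.exp (2 * (Real.pi : ℂ) * Complex.I * (k : ℂ) / (L : ℂ))) ^ b
      = ζ ^ k := by
    intro k
    rw [← Complex.exp_conj, ← Complex.exp_nat_mul, ← Complex.exp_nat_mul, ← Complex.exp_add,
      ← Complex.exp_nat_mul]
    congr 1
    simp only [map_div₀, map_mul, Complex.conj_I, Complex.conj_ofReal, map_ofNat, map_natCast]
    field_simp
    ring
  simp_rw [hterm]
  have hζL : ζ ^ L = 1 := by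
    rw [← Complex.exp_nat_mul]
    have := Complex.exp_int_mul_two_pi_mul_I ((a : ℤ) - b)
    rw [← this]
    congr 1
    field_simp
    push_cast
    ring
  have hζ1 : ζ = 1 ↔ (L : ℤ) ∣ (a : ℤ) - b := by
    rw [Complex.exp_eq_one_iff]
    constructor
    · rintro ⟨m, hm⟩
      refine ⟨m, ?_⟩
      have h2 : (2 * (Real.pi : ℂ) * Complex.I) ≠ 0 := by
        simp [Real.pi_ne_zero, Complex.I_ne_zero]
      rw [div_eq_iff hL0] at hm
      have : ((a : ℂ) - b) = m * L := by
        apply mul_left_cancel₀ h2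
        rw [hm]; ring
      have h3 : (((a : ℤ) - b : ℤ) : ℂ) = (((L : ℤ) * m : ℤ) : ℂ) := by
        push_cast
        rw [this]; ring
      exact_mod_cast h3
    · rintro ⟨m, hm⟩
      refine ⟨m, ?_⟩
      have : ((a : ℂ) - b) = L * m := by exact_mod_cast congrArg (Int.cast : ℤ → ℂ) hm
      rw [this]
      field_simp
  by_cases hd : (L : ℤ) ∣ (a : ℤ) - b
  · rw [if_pos hd]
    have hs : ∑ k ∈ Finset.range L, ζ ^ k = L := by rw [hζ1.mpr hd]; simp
    rw [hs, ENNReal.toReal_inv, ENNReal.toReal_natCast, Complex.real_smul,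
      Complex.ofReal_inv, Complex.ofReal_natCast, inv_mul_cancel₀ hL0]
  · rw [if_neg hd]
    have hζne : ζ ≠ 1 := fun h => hd (hζ1.mp h)
    rw [geom_sum_eq hζne, hζL]
    simp

private lemma pi_integral {n : ℕ} (μ : Measure ℂ) [IsProbabilityMeasure μ] (h : Fin n → ℂ → ℂ) :
    ∫ x : Fin n → ℂ, ∏ j, h j (x j) ∂(Measure.pi fun _ => μ) = ∏ j, ∫ z, h j z ∂μ := by
  letI : MeasureSpace ℂ := ⟨μ⟩
  haveI : SigmaFinite (volume : Measure ℂ) := by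
    change SigmaFinite μ; infer_instance
  exact MeasureTheory.integral_fintype_prod_eq_prod h

private lemma pi_ae {n : ℕ} (μ : Measure ℂ) [IsProbabilityMeasure μ] {P : ℂ → Prop}
    (h : ∀ᵐ z ∂μ, P z) :
    ∀ᵐ x : Fin n → ℂ ∂(Measure.pi fun _ => μ), ∀ j, P (x j) := by
  rw [MeasureTheory.ae_all_iff]
  intro j
  have h0 : μ {z | ¬ P z} = 0 := h
  have := Measure.pi_eval_preimage_null (fun _ : Fin n => μ) (i := j) h0
  exact this

private lemma circS_ae (μS : Measure ℂ)
    (hμS : μS = Measure.map (fun t : ℝ => Complex.exp (Complex.I * (t : ℂ)))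
      ((ENNReal.ofReal (2 * Real.pi))⁻¹ • volume.restrict (Set.Ico 0 (2 * Real.pi)))) :
    ∀ᵐ z ∂μS, ‖z‖ = 1 := by
  subst hμS
  have hgm : Measurable (fun t : ℝ => Complex.exp (Complex.I * (t : ℂ))) := by fun_prop
  rw [MeasureTheory.ae_map_iff hgm.aemeasurable]
  · filter_upwards with t
    rw [Complex.norm_exp]
    simp
  · exact measurableSet_eq_fun (continuous_norm.measurable) measurable_const

private lemma circZ_ae (L : ℕ) (μZ : Measure ℂ)
    (hμZ : μZ = (L : ℝ≥0∞)⁻¹ • ∑ k ∈ Finset.range L,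
      Measure.dirac (Complex.exp (2 * (Real.pi : ℂ) * Complex.I * (k : ℂ) / (L : ℂ)))) :
    ∀ᵐ z ∂μZ, ‖z‖ = 1 := by
  subst hμZ
  have hms : MeasurableSet {z : ℂ | ¬ ‖z‖ = 1} :=
    (measurableSet_eq_fun (continuous_norm.measurable) measurable_const).compl
  rw [MeasureTheory.ae_iff]
  rw [Measure.smul_apply, Measure.coe_finset_sum, Finset.sum_apply]
  have : ∀ k ∈ Finset.range L,
      Measure.dirac (Complex.exp (2 * (Real.pi : ℂ) * Complex.I * (k : ℂ) / (L : ℂ)))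
        {z : ℂ | ¬ ‖z‖ = 1} = 0 := by
    intro k _
    rw [Measure.dirac_apply' _ hms]
    have : ‖Complex.exp (2 * (Real.pi : ℂ) * Complex.I * (k : ℂ) / (L : ℂ))‖ = 1 := by
      rw [Complex.norm_exp]
      have : (2 * (Real.pi : ℂ) * Complex.I * (k : ℂ) / (L : ℂ)).re = 0 := by
        rcases Nat.eq_zero_or_pos L with hh | hh
        · simp [hh]
        · rw [show 2 * (Real.pi : ℂ) * Complex.I * (k : ℂ) / (L : ℂ)
              = ((2 * Real.pi * k / L : ℝ) : ℂ) * Complex.I by push_cast; ring]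
          simp
      rw [this, Real.exp_zero]
    simp [Set.indicator, this]
  rw [Finset.sum_congr rfl this]
  simp

private 
lemma regroup {n d : ℕ} (y : Fin n → ℂ) (c : Fin d → Fin n) (e : Fin d → ℕ) :
    ∏ i, y (c i) ^ e i = ∏ j, y j ^ (∑ i, if c i = j then e i else 0) := by
  have hsingle : ∀ i, ∏ j, y j ^ (if c i = j then e i else 0) = y (c i) ^ e i := by
    intro i
    refine Finset.prod_eq_single_of_mem (c i) (Finset.mem_univ _) ?_ |>.trans (by rw [if_pos rfl])
    intro j _ hj
    rw [if_neg (fun h => hj h.symm), pow_zero]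
  calc ∏ i, y (c i) ^ e i
      = ∏ i, ∏ j, y j ^ (if c i = j then e i else 0) :=
        Finset.prod_congr rfl fun i _ => (hsingle i).symm
    _ = ∏ j, ∏ i, y j ^ (if c i = j then e i else 0) := Finset.prod_comm
    _ = ∏ j, y j ^ (∑ i, if c i = j then e i else 0) := by
        refine Finset.prod_congr rfl fun j _ => ?_
        rw [Finset.prod_pow_eq_pow_sum]

private lemma expand1 {n L : ℕ} (x : Fin n → ℂ) :
    ((∑ ℓ ∈ Finset.Icc 1 L, ‖∑ j, x j ^ ℓ‖ ^ 2 : ℝ) : ℂ)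
      = ∑ t ∈ (Finset.Icc 1 L) ×ˢ (Finset.univ : Finset (Fin n × Fin n)),
          x t.2.1 ^ t.1 * (starRingEnd ℂ) (x t.2.2) ^ t.1 := by
  rw [Finset.sum_product]
  push_cast
  refine Finset.sum_congr rfl fun ℓ _ => ?_
  rw [show ((‖∑ j, x j ^ ℓ‖ : ℂ)) ^ 2
      = (∑ j, x j ^ ℓ) * (starRingEnd ℂ) (∑ j, x j ^ ℓ) by
    rw [Complex.mul_conj, ← Complex.sq_norm]; push_cast; ring]
  rw [map_sum, Finset.sum_mul_sum, ← Finset.univ_product_univ, Finset.sum_product]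
  refine Finset.sum_congr rfl fun j _ => Finset.sum_congr rfl fun j' _ => ?_
  rw [map_pow]

private lemma expand2 {n L d : ℕ} (x : Fin n → ℂ) :
    (((∑ ℓ ∈ Finset.Icc 1 L, ‖∑ j, x j ^ ℓ‖ ^ 2) ^ d : ℝ) : ℂ)
      = ∑ p ∈ Fintype.piFinset
            (fun _ : Fin d => (Finset.Icc 1 L) ×ˢ (Finset.univ : Finset (Fin n × Fin n))),
          ∏ j : Fin n,
            (x j ^ (∑ i, if (p i).2.1 = j then (p i).1 else 0)
              * (starRingEnd ℂ) (x j) ^ (∑ i, if (p i).2.2 = j then (p i).1 else 0)) := by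
  rw [Complex.ofReal_pow, expand1]
  rw [show (∑ t ∈ (Finset.Icc 1 L) ×ˢ (Finset.univ : Finset (Fin n × Fin n)),
        x t.2.1 ^ t.1 * (starRingEnd ℂ) (x t.2.2) ^ t.1) ^ d
      = ∏ _i : Fin d, ∑ t ∈ (Finset.Icc 1 L) ×ˢ (Finset.univ : Finset (Fin n × Fin n)),
        x t.2.1 ^ t.1 * (starRingEnd ℂ) (x t.2.2) ^ t.1 by
    rw [Finset.prod_const, Finset.card_univ, Fintype.card_fin]]
  rw [Finset.prod_univ_sum]
  refine Finset.sum_congr rfl fun p _ => ?_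
  rw [Finset.prod_mul_distrib, regroup x (fun i => (p i).2.1) (fun i => (p i).1),
    regroup (fun j => (starRingEnd ℂ) (x j)) (fun i => (p i).2.2) (fun i => (p i).1),
    ← Finset.prod_mul_distrib]

private lemma key (n L d : ℕ) (μ : Measure ℂ) [IsProbabilityMeasure μ]
    (hcirc : ∀ᵐ z ∂μ, ‖z‖ = 1) (m : ℕ → ℕ → ℂ)
    (hm : ∀ a b, ∫ z, z ^ a * (starRingEnd ℂ) z ^ b ∂μ = m a b) :
    ∫ x : Fin n → ℂ, (∑ ℓ ∈ Finset.Icc 1 L, ‖∑ j, x j ^ ℓ‖ ^ 2) ^ d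
        ∂(Measure.pi fun _ => μ)
    = (∑ p ∈ Fintype.piFinset
          (fun _ : Fin d => (Finset.Icc 1 L) ×ˢ (Finset.univ : Finset (Fin n × Fin n))),
        ∏ j : Fin n,
          m (∑ i, if (p i).2.1 = j then (p i).1 else 0)
            (∑ i, if (p i).2.2 = j then (p i).1 else 0)).re := by
  have hae : ∀ᵐ x : Fin n → ℂ ∂(Measure.pi fun _ => μ), ∀ j, ‖x j‖ = 1 :=
    pi_ae μ hcirc
  have hintp : ∀ (aa bb : Fin n → ℕ),
      Integrable (fun x : Fin n → ℂ => ∏ j, x j ^ aa j * (starRingEnd ℂ) (x j) ^ bb j)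
        (Measure.pi fun _ => μ) := by
    intro aa bb
    have hc : Continuous
        (fun x : Fin n → ℂ => ∏ j, x j ^ aa j * (starRingEnd ℂ) (x j) ^ bb j) := by
      apply continuous_finset_prod
      intro j _
      exact ((continuous_apply j).pow _).mul
        ((Complex.continuous_conj.comp (continuous_apply j)).pow _)
    refine Integrable.mono' (integrable_const 1) hc.aestronglyMeasurable ?_
    filter_upwards [hae] with x hx
    have : ∀ j : Fin n, ‖x j ^ aa j * (starRingEnd ℂ) (x j) ^ bb j‖ = 1 := by
      intro j
      rw [norm_mul, norm_pow, norm_pow,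
        Complex.norm_conj, hx j, one_pow, one_pow, one_mul]
    rw [norm_prod]
    simp [this, hx]
  have h1 : ∫ x : Fin n → ℂ, (∑ ℓ ∈ Finset.Icc 1 L, ‖∑ j, x j ^ ℓ‖ ^ 2) ^ d
        ∂(Measure.pi fun _ => μ)
      = (∫ x : Fin n → ℂ,
          ((((∑ ℓ ∈ Finset.Icc 1 L, ‖∑ j, x j ^ ℓ‖ ^ 2) ^ d : ℝ)) : ℂ)
          ∂(Measure.pi fun _ => μ)).re := by
    have h0 : ((∫ x : Fin n → ℂ, (∑ ℓ ∈ Finset.Icc 1 L, ‖∑ j, x j ^ ℓ‖ ^ 2) ^ d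
          ∂(Measure.pi fun _ => μ) : ℝ) : ℂ)
        = ∫ x : Fin n → ℂ,
            ((((∑ ℓ ∈ Finset.Icc 1 L, ‖∑ j, x j ^ ℓ‖ ^ 2) ^ d : ℝ)) : ℂ)
            ∂(Measure.pi fun _ => μ) := integral_ofReal.symm
    rw [← Complex.ofReal_re (∫ x : Fin n → ℂ,
      (∑ ℓ ∈ Finset.Icc 1 L, ‖∑ j, x j ^ ℓ‖ ^ 2) ^ d ∂(Measure.pi fun _ => μ)), h0]
  rw [h1]
  congr 1
  calc ∫ x : Fin n → ℂ,
        ((((∑ ℓ ∈ Finset.Icc 1 L, ‖∑ j, x j ^ ℓ‖ ^ 2) ^ d : ℝ)) : ℂ)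
        ∂(Measure.pi fun _ => μ)
      = ∫ x : Fin n → ℂ, ∑ p ∈ Fintype.piFinset
            (fun _ : Fin d => (Finset.Icc 1 L) ×ˢ (Finset.univ : Finset (Fin n × Fin n))),
          ∏ j : Fin n,
            (x j ^ (∑ i, if (p i).2.1 = j then (p i).1 else 0)
              * (starRingEnd ℂ) (x j) ^ (∑ i, if (p i).2.2 = j then (p i).1 else 0))
          ∂(Measure.pi fun _ => μ) :=
        integral_congr_ae (Eventually.of_forall fun x => expand2 x)
    _ = ∑ p ∈ Fintype.piFinset
            (fun _ : Fin d => (Finset.Icc 1 L) ×ˢ (Finset.univ : Finset (Fin n × Fin n))),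
          ∫ x : Fin n → ℂ, ∏ j : Fin n,
            (x j ^ (∑ i, if (p i).2.1 = j then (p i).1 else 0)
              * (starRingEnd ℂ) (x j) ^ (∑ i, if (p i).2.2 = j then (p i).1 else 0))
          ∂(Measure.pi fun _ => μ) :=
        integral_finset_sum _ (fun p _ => hintp _ _)
    _ = ∑ p ∈ Fintype.piFinset
          (fun _ : Fin d => (Finset.Icc 1 L) ×ˢ (Finset.univ : Finset (Fin n × Fin n))),
        ∏ j : Fin n,
          m (∑ i, if (p i).2.1 = j then (p i).1 else 0)
            (∑ i, if (p i).2.2 = j then (p i).1 else 0) := by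
        refine Finset.sum_congr rfl fun p _ => ?_
        rw [pi_integral μ (fun j z => z ^ (∑ i, if (p i).2.1 = j then (p i).1 else 0)
          * (starRingEnd ℂ) z ^ (∑ i, if (p i).2.2 = j then (p i).1 else 0))]
        exact Finset.prod_congr rfl fun j _ => hm _ _

/-- **Comparison of LDLR moments: uniform circle prior vs. `L`-cyclic prior.**
If `x₁,…,x_n` are i.i.d. uniform (Haar) on the unit circle `U(1)` and `y₁,…,y_n`
are i.i.d. uniform on the `L`-th roots of unity, then
`E[(∑_{ℓ=1}^L |∑_j x_j^ℓ|²)^d] ≤ E[(∑_{ℓ=1}^L |∑_j y_j^ℓ|²)^d]`. -/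
theorem stmt2 (n L d : ℕ) (hn : 1 ≤ n) (hL : 2 ≤ L)
    (μS : Measure ℂ) [IsProbabilityMeasure μS]
    (hμS : μS = Measure.map (fun t : ℝ => Complex.exp (Complex.I * (t : ℂ)))
      ((ENNReal.ofReal (2 * Real.pi))⁻¹ • volume.restrict (Set.Ico 0 (2 * Real.pi))))
    (μZ : Measure ℂ) [IsProbabilityMeasure μZ]
    (hμZ : μZ = (L : ℝ≥0∞)⁻¹ • ∑ k ∈ Finset.range L,
      Measure.dirac (Complex.exp (2 * (Real.pi : ℂ) * Complex.I * (k : ℂ) / (L : ℂ)))) :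
    ∫ x : Fin n → ℂ, (∑ ℓ ∈ Finset.Icc 1 L, ‖∑ j, x j ^ ℓ‖ ^ 2) ^ d
        ∂(Measure.pi fun _ => μS)
    ≤ ∫ y : Fin n → ℂ, (∑ ℓ ∈ Finset.Icc 1 L, ‖∑ j, y j ^ ℓ‖ ^ 2) ^ d
        ∂(Measure.pi fun _ => μZ) := by
  rw [key n L d μS (circS_ae μS hμS) (fun a b => if a = b then 1 else 0)
      (fun a b => by rw [hμS]; exact momS a b),
    key n L d μZ (circZ_ae L μZ hμZ) (fun a b => if (L : ℤ) ∣ (a : ℤ) - b then 1 else 0)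
      (fun a b => by rw [hμZ]; exact momZ L hL a b)]
  rw [Complex.re_sum, Complex.re_sum]
  apply Finset.sum_le_sum
  intro p _
  beta_reduce
  rw [prod_ite01, prod_ite01]
  split_ifs with h1 h2
  · exact le_refl _
  · exfalso
    exact h2 (fun j => by rw [h1 j]; simp)
  · simp
  · exact le_refl _
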